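/- Let f ≥ 3 and let T = SL(2, GF(2^f)). Then there exist two maximal subgroups K_1 and K_2 of T, each isomorphic to the dihedral group of order 2(2^f − 1), such that K_1 ∩ K_2 = 1. -/

import Mathlib

open Matrix

set_option linter.unusedSectionVars false
namespace SL2Max

variable {F : Type} [Field F] [CharP F 2]

local notation "SL2" => Matrix.SpecialLinearGroup (Fin 2) F

lemma two_eq_zero : (2 : F) = 0 := CharTwo.two_eq_zero

lemma sq_eq_one {a : F} (h : a * a = 1) : a = 1 := by
  have h2 : (a - 1) * (a - 1) = 0 := by
    linear_combination h + (1 - a) * (two_eq_zero (F := F))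
  exact sub_eq_zero.mp (mul_self_eq_zero.mp h2)

lemma sq_surj [Finite F] (y : F) : ∃ c : F, c * c = y := by
  have hinj : Function.Injective (fun c : F => c * c) := by
    intro a b hab
    have h2 : (a - b) * (a - b) = 0 := by
      linear_combination hab + (b * b - a * b) * (two_eq_zero (F := F))
    exact sub_eq_zero.mp (mul_self_eq_zero.mp h2)
  exact Finite.injective_iff_surjective.mp hinj y

/-- diagonal element -/
def dM (a : Fˣ) : SL2 :=
  ⟨!![(a : F), 0; 0, ((a⁻¹ : Fˣ) : F)], by simp [Matrix.det_fin_two_of]⟩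

/-- upper unitriangular -/
def uM (x : F) : SL2 :=
  ⟨!![1, x; 0, 1], by simp [Matrix.det_fin_two_of]⟩

/-- antidiagonal involution -/
def wM : SL2 :=
  ⟨!![0, 1; 1, 0], by simp [Matrix.det_fin_two_of, CharTwo.neg_eq]⟩

lemma mul_entry (A B : SL2) (i j : Fin 2) :
    (A * B).1 i j = A.1 i 0 * B.1 0 j + A.1 i 1 * B.1 1 j := by
  rw [Matrix.SpecialLinearGroup.coe_mul, Matrix.mul_apply, Fin.sum_univ_two]

lemma inv_coe (A : SL2) :
    (A⁻¹).1 = !![A.1 1 1, -A.1 0 1; -A.1 1 0, A.1 0 0] := by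
  rw [Matrix.SpecialLinearGroup.coe_inv, Matrix.adjugate_fin_two]

lemma det_rel (A : SL2) : A.1 0 0 * A.1 1 1 - A.1 0 1 * A.1 1 0 = 1 := by
  rw [← Matrix.det_fin_two]; exact A.2

lemma SL_ext {A B : SL2} (h : A.1 = B.1) : A = B := Subtype.ext h

@[simp] lemma dM_00 (a : Fˣ) : (dM a).1 0 0 = (a : F) := rfl
@[simp] lemma dM_01 (a : Fˣ) : (dM a).1 0 1 = 0 := rfl
@[simp] lemma dM_10 (a : Fˣ) : (dM a).1 1 0 = 0 := rfl
@[simp] lemma dM_11 (a : Fˣ) : (dM a).1 1 1 = ((a⁻¹ : Fˣ) : F) := rfl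
@[simp] lemma uM_00 (x : F) : (uM x).1 0 0 = 1 := rfl
@[simp] lemma uM_01 (x : F) : (uM x).1 0 1 = x := rfl
@[simp] lemma uM_10 (x : F) : (uM x).1 1 0 = 0 := rfl
@[simp] lemma uM_11 (x : F) : (uM x).1 1 1 = 1 := rfl
@[simp] lemma wM_00 : (wM (F := F)).1 0 0 = 0 := rfl
@[simp] lemma wM_01 : (wM (F := F)).1 0 1 = 1 := rfl
@[simp] lemma wM_10 : (wM (F := F)).1 1 0 = 1 := rfl
@[simp] lemma wM_11 : (wM (F := F)).1 1 1 = 0 := rfl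

/-- `K₁`: the monomial (diagonal ∪ antidiagonal) subgroup of `SL₂`. -/
def K1 : Subgroup SL2 where
  carrier := {A | (A.1 0 1 = 0 ∧ A.1 1 0 = 0) ∨ (A.1 0 0 = 0 ∧ A.1 1 1 = 0)}
  one_mem' := Or.inl ⟨by simp, by simp⟩
  mul_mem' := by
    rintro A B (⟨h1, h2⟩ | ⟨h1, h2⟩) (⟨g1, g2⟩ | ⟨g1, g2⟩)
    · exact Or.inl ⟨by rw [mul_entry, h1, g1]; ring, by rw [mul_entry, h2, g2]; ring⟩
    · exact Or.inr ⟨by rw [mul_entry, h1, g1]; ring, by rw [mul_entry, h2, g2]; ring⟩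
    · exact Or.inr ⟨by rw [mul_entry, h1, g2]; ring, by rw [mul_entry, h2, g1]; ring⟩
    · exact Or.inl ⟨by rw [mul_entry, h1, g2]; ring, by rw [mul_entry, h2, g1]; ring⟩
  inv_mem' := by
    rintro A (⟨h1, h2⟩ | ⟨h1, h2⟩)
    · exact Or.inl ⟨by rw [inv_coe]; simp [h1], by rw [inv_coe]; simp [h2]⟩
    · exact Or.inr ⟨by rw [inv_coe]; simp [h2], by rw [inv_coe]; simp [h1]⟩

lemma mem_K1 {A : SL2} :
    A ∈ K1 ↔ (A.1 0 1 = 0 ∧ A.1 1 0 = 0) ∨ (A.1 0 0 = 0 ∧ A.1 1 1 = 0) := Iff.rfl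

lemma dM_mem_K1 (a : Fˣ) : dM a ∈ K1 := Or.inl ⟨rfl, rfl⟩

lemma wdM_mem_K1 (a : Fˣ) : wM * dM a ∈ K1 := by
  refine Or.inr ⟨?_, ?_⟩ <;> · rw [mul_entry]; simp

lemma wM_mem_K1 : (wM : SL2) ∈ K1 := Or.inr ⟨rfl, rfl⟩

-- relations
lemma dM_mul (a b : Fˣ) : (dM a) * dM b = dM (a * b) := by
  apply SL_ext
  apply Matrix.ext; intro i j
  fin_cases i <;> fin_cases j <;> rw [Matrix.SpecialLinearGroup.coe_mul] <;>
    simp [dM, Matrix.mul_apply, Fin.sum_univ_two] <;> ring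

lemma dM_one : dM (1 : Fˣ) = (1 : SL2) := by
  apply SL_ext
  apply Matrix.ext; intro i j
  fin_cases i <;> fin_cases j <;> simp [dM]

lemma w_mul_w : (wM : SL2) * wM = 1 := by
  apply SL_ext
  apply Matrix.ext; intro i j
  fin_cases i <;> fin_cases j <;> rw [Matrix.SpecialLinearGroup.coe_mul] <;>
    simp [wM, Matrix.mul_apply, Fin.sum_univ_two]

lemma dM_mul_w (a : Fˣ) : dM a * wM = wM * dM a⁻¹ := by
  apply SL_ext
  apply Matrix.ext; intro i j
  fin_cases i <;> fin_cases j <;> rw [Matrix.SpecialLinearGroup.coe_mul,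
      Matrix.SpecialLinearGroup.coe_mul] <;>
    simp [dM, wM, Matrix.mul_apply, Fin.sum_univ_two]

lemma dM_u_dM (a : Fˣ) (x : F) :
    dM a * uM x * (dM a)⁻¹ = uM ((a : F) * (a : F) * x) := by
  rw [eq_comm, eq_mul_inv_iff_mul_eq]
  apply SL_ext
  apply Matrix.ext; intro i j
  fin_cases i <;> fin_cases j <;> rw [Matrix.SpecialLinearGroup.coe_mul,
      Matrix.SpecialLinearGroup.coe_mul] <;>
    simp [dM, uM, Matrix.mul_apply, Fin.sum_univ_two] <;>
    (try ring) <;> (field_simp)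
lemma uM_zero : uM (0 : F) = 1 := by
  apply SL_ext
  apply Matrix.ext; intro i j
  fin_cases i <;> fin_cases j <;> simp [uM]

/-- the diagonal unit of an upper-triangular `A`. -/
def triUnit (A : SL2) (h : A.1 1 0 = 0) : Fˣ :=
  ⟨A.1 0 0, A.1 1 1,
    by have := det_rel A; rw [h] at this; linear_combination this,
    by have := det_rel A; rw [h] at this; linear_combination this⟩

lemma tri_eq {A : SL2} (h : A.1 1 0 = 0) :
    dM (triUnit A h) * uM (A.1 0 1 * A.1 1 1) = A := by
  have hdet := det_rel A
  rw [h] at hdet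
  apply SL_ext
  apply Matrix.ext; intro i j
  fin_cases i <;> fin_cases j <;>
    simp only [mul_entry] <;> simp [dM, uM, triUnit]
  · linear_combination A.1 0 1 * hdet
  · exact h.symm

lemma bruhat_eq {A : SL2} (h : A.1 1 0 ≠ 0) :
    uM (A.1 0 0 / A.1 1 0) * (wM * dM (Units.mk0 (A.1 1 0) h)) *
      uM (A.1 1 1 / A.1 1 0) = A := by
  have hdet := det_rel A
  apply SL_ext
  apply Matrix.ext; intro i j
  fin_cases i <;> fin_cases j <;>
    simp only [mul_entry] <;> simp [dM, uM, wM] <;> field_simp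
  linear_combination hdet + (two_eq_zero (F := F))

lemma upper_case {H : Subgroup SL2} (hK : K1 ≤ H) {A : SL2} (hA : A ∈ H)
    (h10 : A.1 1 0 = 0) (h01 : A.1 0 1 ≠ 0) : ∃ x : F, x ≠ 0 ∧ uM x ∈ H := by
  have h11 : A.1 1 1 ≠ 0 := by
    have := det_rel A
    rw [h10] at this
    intro hz
    rw [hz] at this
    simp at this
  refine ⟨A.1 0 1 * A.1 1 1, mul_ne_zero h01 h11, ?_⟩
  have : uM (A.1 0 1 * A.1 1 1) = (dM (triUnit A h10))⁻¹ * A :=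
    eq_inv_mul_iff_mul_eq.mpr (tri_eq h10)
  rw [this]
  exact mul_mem (inv_mem (hK (dM_mem_K1 _))) hA

lemma all_u [Finite F] {H : Subgroup SL2} (hK : K1 ≤ H) {x : F} (hx : x ≠ 0)
    (hxH : uM x ∈ H) : ∀ y : F, uM y ∈ H := by
  intro y
  by_cases hy : y = 0
  · rw [hy, uM_zero]; exact one_mem H
  · obtain ⟨c, hc⟩ := sq_surj (F := F) (y / x)
    have hc0 : c ≠ 0 := by
      intro h0
      rw [h0, mul_zero, eq_comm, div_eq_zero_iff] at hc
      tauto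
    have hcc : (c : F) * c * x = y := by
      field_simp at hc
      linear_combination hc
    have := dM_u_dM (Units.mk0 c hc0) x
    rw [Units.val_mk0, hcc] at this
    rw [← this]
    exact mul_mem (mul_mem (hK (dM_mem_K1 _)) hxH) (inv_mem (hK (dM_mem_K1 _)))

lemma eq_top_of {H : Subgroup SL2} (hK : K1 ≤ H) (hu : ∀ y : F, uM y ∈ H) :
    H = ⊤ := by
  rw [Subgroup.eq_top_iff']
  intro A
  by_cases h : A.1 1 0 = 0
  · exact tri_eq h ▸ mul_mem (hK (dM_mem_K1 _)) (hu _)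
  · exact bruhat_eq h ▸ mul_mem (mul_mem (hu _) (hK (wdM_mem_K1 _))) (hu _)
lemma uM_one_not_mem : uM (1 : F) ∉ K1 := by
  rintro (⟨h, -⟩ | ⟨h, -⟩) <;> exact (one_ne_zero : (1:F) ≠ 0) (by simpa [uM] using h)

lemma K1_ne_top : (K1 : Subgroup SL2) ≠ ⊤ := by
  intro htop
  exact uM_one_not_mem (htop ▸ Subgroup.mem_top (uM (1 : F)))

lemma K1_isCoatom [Finite F] : IsCoatom (K1 : Subgroup SL2) := by
  refine ⟨K1_ne_top, fun H hH => ?_⟩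
  have hK : K1 ≤ H := hH.le
  obtain ⟨A, hAH, hAK⟩ := SetLike.exists_of_lt hH
  suffices hmain : ∃ x : F, x ≠ 0 ∧ uM x ∈ H by
    obtain ⟨x, hx0, hxH⟩ := hmain
    exact eq_top_of hK (all_u hK hx0 hxH)
  rw [mem_K1] at hAK
  push_neg at hAK
  by_cases hr : A.1 1 0 = 0
  · refine upper_case hK hAH hr fun h01 => hAK.1 h01 hr
  · by_cases hs : A.1 1 1 = 0
    · have hp : A.1 0 0 ≠ 0 := fun h00 => hAK.2 h00 hs
      refine upper_case hK (mul_mem hAH (hK wM_mem_K1)) ?_ ?_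
      · rw [mul_entry]; simp [hs]
      · rw [mul_entry]; simpa using hp
    · by_cases hp : A.1 0 0 = 0
      · refine upper_case hK (mul_mem (hK wM_mem_K1) hAH) ?_ ?_
        · rw [mul_entry]; simp [hp]
        · rw [mul_entry]; simpa using hs
      · by_cases hq : A.1 0 1 = 0
        · refine upper_case hK (mul_mem (mul_mem (hK wM_mem_K1) hAH) (hK wM_mem_K1)) ?_ ?_
          · rw [mul_entry, mul_entry, mul_entry]; simp [hq]
          · rw [mul_entry, mul_entry, mul_entry]; simpa using hr
        · -- all four entries nonzero
          obtain ⟨c, hc⟩ := sq_surj (F := F) (A.1 0 1 * A.1 1 0 / (A.1 0 0 * A.1 1 1))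
          have hps : A.1 0 0 * A.1 1 1 ≠ 0 := mul_ne_zero hp hs
          have hqr : A.1 0 1 * A.1 1 0 ≠ 0 := mul_ne_zero hq hr
          have hc0 : c ≠ 0 := by
            intro h0
            rw [h0, mul_zero, eq_comm, div_eq_zero_iff] at hc
            tauto
          have hc' : c * c * (A.1 0 0 * A.1 1 1) = A.1 0 1 * A.1 1 0 := by
            field_simp at hc
            linear_combination hc
          set cu : Fˣ := Units.mk0 c hc0 with hcu
          have hcuval : ((cu : Fˣ) : F) = c := rfl
          have hcuv : ((cu⁻¹ : Fˣ) : F) = c⁻¹ := by rw [hcu]; simp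
          set B : SL2 := A * dM cu * A⁻¹ with hB
          have hBH : B ∈ H := mul_mem (mul_mem hAH (hK (dM_mem_K1 cu))) (inv_mem hAH)
          have e00 : B.1 0 0 = 0 := by
            rw [hB, mul_entry, mul_entry, mul_entry, inv_coe]
            simp [hcuval, hcuv]
            field_simp
            linear_combination hc'
          have e10 : B.1 1 0 = 0 → False := by
            intro hz
            rw [hB, mul_entry, mul_entry, mul_entry, inv_coe] at hz
            simp [hcuval, hcuv] at hz
            field_simp at hz
            have h1 : (A.1 1 0 * A.1 1 1) * (c * c - 1) = 0 := by
              linear_combination hz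
            have hcc : c * c - 1 = 0 := by
              rcases mul_eq_zero.mp h1 with h | h
              · exact absurd h (mul_ne_zero hr hs)
              · exact h
            have hone : A.1 0 1 * A.1 1 0 = A.1 0 0 * A.1 1 1 := by
              linear_combination (-1 : F) * hc' + (A.1 0 0 * A.1 1 1) * hcc
            have := det_rel A
            rw [hone] at this
            simp at this
          have e11 : B.1 1 1 = 0 → False := by
            intro hz
            rw [hB, mul_entry, mul_entry, mul_entry, inv_coe] at hz
            simp [hcuval, hcuv] at hz
            field_simp at hz
            have hzz : A.1 0 0 * A.1 1 1 = A.1 0 1 * A.1 1 0 * (c * c) := by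
              linear_combination hz
            have hsq : (A.1 0 1 * A.1 1 0) * (A.1 0 1 * A.1 1 0)
                = (A.1 0 0 * A.1 1 1) * (A.1 0 0 * A.1 1 1) := by
              linear_combination (-(A.1 0 1 * A.1 1 0)) * hc'
                + (-(A.1 0 0 * A.1 1 1)) * hzz
            have hone : A.1 0 1 * A.1 1 0 = A.1 0 0 * A.1 1 1 := by
              have h2 : (A.1 0 1 * A.1 1 0 - A.1 0 0 * A.1 1 1)
                  * (A.1 0 1 * A.1 1 0 - A.1 0 0 * A.1 1 1) = 0 := by
                linear_combination hsq + (A.1 0 0 * A.1 1 1 * (A.1 0 0 * A.1 1 1)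
                  - A.1 0 1 * A.1 1 0 * (A.1 0 0 * A.1 1 1)) * (two_eq_zero (F := F))
              exact sub_eq_zero.mp (mul_self_eq_zero.mp h2)
            have := det_rel A
            rw [hone] at this
            simp at this
          refine upper_case hK (mul_mem (hK wM_mem_K1) hBH) ?_ ?_
          · rw [mul_entry]; simpa using e00
          · rw [mul_entry]; simpa using e11

lemma K1_iso_dihedral [Finite F] {n : ℕ} (hn : Nat.card Fˣ = n) :
    Nonempty (↥(K1 : Subgroup SL2) ≃* DihedralGroup n) := by
  subst hn
  have hcyc : IsCyclic Fˣ := inferInstance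
  let e : Multiplicative (ZMod (Nat.card Fˣ)) ≃* Fˣ := zmodCyclicMulEquiv hcyc
  let ε : ZMod (Nat.card Fˣ) → Fˣ := fun i => e (Multiplicative.ofAdd i)
  have εadd : ∀ i j, ε (i + j) = ε i * ε j := fun i j => by
    show e (Multiplicative.ofAdd (i + j)) = _
    rw [ofAdd_add]
    exact _root_.map_mul e _ _
  have εneg : ∀ i, ε (-i) = (ε i)⁻¹ := fun i => by
    show e (Multiplicative.ofAdd (-i)) = _
    rw [ofAdd_neg]
    exact _root_.map_inv e _
  have εsub : ∀ i j, ε (i - j) = ε i * (ε j)⁻¹ := fun i j => by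
    rw [sub_eq_add_neg, εadd, εneg]
  let φ : DihedralGroup (Nat.card Fˣ) → ↥(K1 : Subgroup SL2) := fun x =>
    match x with
    | .r i => ⟨dM (ε i), dM_mem_K1 _⟩
    | .sr i => ⟨wM * dM (ε i), wdM_mem_K1 _⟩
  have hmul : ∀ x y, φ (x * y) = φ x * φ y := by
    rintro (i | i) (j | j) <;>
      refine Subtype.ext (?_ : _ = (_ : SL2) * _)
    · show dM (ε (i + j)) = dM (ε i) * dM (ε j)
      rw [dM_mul, εadd]
    · show wM * dM (ε (j - i)) = dM (ε i) * (wM * dM (ε j))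
      rw [← mul_assoc, dM_mul_w, mul_assoc, dM_mul, εsub, mul_comm ((ε i)⁻¹) (ε j)]
    · show wM * dM (ε (i + j)) = (wM * dM (ε i)) * dM (ε j)
      rw [mul_assoc, dM_mul, εadd]
    · show dM (ε (j - i)) = (wM * dM (ε i)) * (wM * dM (ε j))
      rw [mul_assoc, ← mul_assoc (dM (ε i)), dM_mul_w, mul_assoc wM, ← mul_assoc,
        w_mul_w, one_mul, dM_mul, εsub, mul_comm ((ε i)⁻¹) (ε j)]
  have wdM00 : ∀ a : Fˣ, (wM * dM a).1 0 0 = 0 := fun a => by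
    rw [mul_entry]; simp
  have hinj : Function.Injective φ := by
    have hdM : ∀ i j : ZMod (Nat.card Fˣ), dM (ε i) = dM (ε j) → i = j := by
      intro i j hij
      have h00 : ((ε i : Fˣ) : F) = ((ε j : Fˣ) : F) := by
        have := congrArg (fun M : SL2 => M.1 0 0) hij
        simpa using this
      have : ε i = ε j := Units.ext h00
      have := e.injective this
      exact Multiplicative.ofAdd.injective this
    rintro (i | i) (j | j) hij <;> rw [Subtype.ext_iff] at hij
    · exact congrArg _ (hdM _ _ hij)
    · exfalso
      have := congrArg (fun M : SL2 => M.1 0 0) hij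
      rw [dM_00, wdM00] at this
      exact (ε i).ne_zero this
    · exfalso
      have := congrArg (fun M : SL2 => M.1 0 0) hij
      rw [dM_00, wdM00] at this
      exact (ε j).ne_zero this.symm
    · exact congrArg _ (hdM _ _ (mul_left_cancel hij))
  have hsurj : Function.Surjective φ := by
    rintro ⟨A, hA⟩
    rcases hA with ⟨h01, h10⟩ | ⟨h00, h11⟩
    · obtain ⟨m, hm⟩ := e.surjective (triUnit A h10)
      refine ⟨.r (Multiplicative.toAdd m), Subtype.ext (?_ : dM (ε _) = A)⟩
      have : ε (Multiplicative.toAdd m) = triUnit A h10 := hm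
      rw [this]
      apply SL_ext
      apply Matrix.ext; intro i j
      fin_cases i <;> fin_cases j <;> simp [dM, triUnit]
      · exact h01.symm
      · exact h10.symm
    · have hd := det_rel A
      rw [h00, h11] at hd
      have h1 : A.1 1 0 * A.1 0 1 = 1 := by
        linear_combination hd + A.1 0 1 * A.1 1 0 * (two_eq_zero (F := F))
      have h2 : A.1 0 1 * A.1 1 0 = 1 := by rw [mul_comm]; exact h1
      obtain ⟨m, hm⟩ := e.surjective ⟨A.1 1 0, A.1 0 1, h1, h2⟩
      refine ⟨.sr (Multiplicative.toAdd m), Subtype.ext (?_ : wM * dM (ε _) = A)⟩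
      have : ε (Multiplicative.toAdd m) = ⟨A.1 1 0, A.1 0 1, h1, h2⟩ := hm
      rw [this]
      apply SL_ext
      apply Matrix.ext; intro i j
      fin_cases i <;> fin_cases j <;>
        rw [Matrix.SpecialLinearGroup.coe_mul] <;>
        simp [dM, wM, Matrix.mul_apply, Fin.sum_univ_two]
      · exact h00.symm
      · exact h11.symm
  exact ⟨(MulEquiv.ofBijective (MonoidHom.mk' φ hmul) ⟨hinj, hsurj⟩).symm⟩
/-- conjugating element -/
def g0 : SL2 := uM (1 : F)

lemma g0_sq : (g0 : SL2) * g0 = 1 := by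
  apply SL_ext
  apply Matrix.ext; intro i j
  fin_cases i <;> fin_cases j <;> rw [Matrix.SpecialLinearGroup.coe_mul] <;>
    simp [g0, uM, Matrix.mul_apply, Fin.sum_univ_two] <;>
    linear_combination (two_eq_zero (F := F))

lemma g0_inv : (g0 : SL2)⁻¹ = g0 := inv_eq_of_mul_eq_one_left g0_sq

/-- `K₂`: the conjugate of `K₁` by `g0`. -/
def K2 : Subgroup SL2 :=
  (MulEquiv.mapSubgroup (MulAut.conj (g0 : SL2) : SL2 ≃* SL2)) K1

lemma K2_isCoatom [Finite F] : IsCoatom (K2 : Subgroup SL2) :=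
  (OrderIso.isCoatom_iff (MulEquiv.mapSubgroup (MulAut.conj (g0 : SL2) : SL2 ≃* SL2))
    K1).mpr K1_isCoatom

lemma K2_iso_dihedral [Finite F] {n : ℕ} (hn : Nat.card Fˣ = n) :
    Nonempty (↥(K2 : Subgroup SL2) ≃* DihedralGroup n) := by
  obtain ⟨e1⟩ := K1_iso_dihedral (F := F) hn
  exact ⟨((MulEquiv.subgroupMap (MulAut.conj (g0 : SL2) : SL2 ≃* SL2) K1).symm.trans e1)⟩

lemma K1_inf_K2 : (K1 : Subgroup SL2) ⊓ K2 = ⊥ := by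
  rw [eq_bot_iff]
  rintro x ⟨hx1, hx2⟩
  obtain ⟨y, hy, hxy⟩ := hx2
  have hxy' : (g0 : SL2) * y * g0 = x := by
    rw [← hxy]
    show _ = (g0 : SL2) * y * g0⁻¹
    rw [g0_inv]
  rw [Subgroup.mem_bot]
  have x00eq : x.1 0 0 = y.1 0 0 + y.1 1 0 := by
    rw [← hxy']
    simp only [mul_entry]
    simp [g0, uM]
  have x01eq : x.1 0 1 = y.1 0 0 + y.1 1 0 + (y.1 0 1 + y.1 1 1) := by
    rw [← hxy']
    simp only [mul_entry]
    simp [g0, uM]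
  have x10eq : x.1 1 0 = y.1 1 0 := by
    rw [← hxy']
    simp only [mul_entry]
    simp [g0, uM]
  rcases hy with ⟨hy01, hy10⟩ | ⟨hy00, hy11⟩
  · rcases hx1 with ⟨hx01, hx10⟩ | ⟨hx00, hx11⟩
    · have hdet := det_rel y
      rw [hy01] at hdet
      have h1 : y.1 0 0 * y.1 1 1 = 1 := by linear_combination hdet
      have hsum : y.1 0 0 + y.1 1 1 = 0 := by
        rw [hx01, hy01, hy10] at x01eq
        linear_combination - x01eq
      have hyy : y.1 1 1 = y.1 0 0 := by
        linear_combination hsum + (- y.1 0 0) * (two_eq_zero (F := F))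
      rw [hyy] at h1
      have h00 : y.1 0 0 = 1 := sq_eq_one h1
      have h11 : y.1 1 1 = 1 := by rw [hyy, h00]
      have hy1 : y = 1 := by
        apply SL_ext
        apply Matrix.ext; intro i j
        fin_cases i <;> fin_cases j <;> simp [h00, hy01, hy10, h11]
      rw [← hxy', hy1, mul_one, g0_sq]
    · exfalso
      have hdet := det_rel y
      rw [hy01] at hdet
      have hz : y.1 0 0 = 0 := by
        rw [hx00, hy10] at x00eq
        linear_combination - x00eq
      rw [hz] at hdet
      simp at hdet
  · have hdet := det_rel y
    rw [hy00, hy11] at hdet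
    have hy10ne : y.1 1 0 ≠ 0 := by
      intro h
      rw [h] at hdet
      simp at hdet
    rcases hx1 with ⟨hx01, hx10⟩ | ⟨hx00, hx11⟩
    · rw [hx10] at x10eq
      exact absurd x10eq.symm hy10ne
    · exfalso
      apply hy10ne
      rw [hx00, hy00] at x00eq
      linear_combination - x00eq

end SL2Max

/-- For `f ≥ 3` and `T = SL(2, GF(2^f))` (identified with `PSL(2, 2^f)`), there exist
two maximal subgroups `K₁, K₂` of `T`, each isomorphic to the dihedral group of
order `2(2^f − 1)`, intersecting trivially. -/
theorem exists_disjoint_maximal_dihedral_subgroups (f : ℕ) (hf : 3 ≤ f) :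
    ∃ K₁ K₂ : Subgroup (Matrix.SpecialLinearGroup (Fin 2) (GaloisField 2 f)),
      IsCoatom K₁ ∧ IsCoatom K₂ ∧
      Nonempty (K₁ ≃* DihedralGroup (2 ^ f - 1)) ∧
      Nonempty (K₂ ≃* DihedralGroup (2 ^ f - 1)) ∧
      K₁ ⊓ K₂ = ⊥ := by
  haveI : Fact (Nat.Prime 2) := ⟨Nat.prime_two⟩
  have hn : Nat.card (GaloisField 2 f)ˣ = 2 ^ f - 1 := by
    rw [Nat.card_units, GaloisField.card 2 f (by omega)]
  exact ⟨SL2Max.K1, SL2Max.K2, SL2Max.K1_isCoatom, SL2Max.K2_isCoatom,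
    SL2Max.K1_iso_dihedral hn, SL2Max.K2_iso_dihedral hn, SL2Max.K1_inf_K2⟩
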